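/- (Lemma 2, first case.) If a12 ≥ μ(α) = 1 − P1/(γ2 − γ1), then the function κ ↦ R2(q(κ), κ) is monotonically nondecreasing on [0,1). -/

import Mathlib

namespace Stmt8Aux

noncomputable def Dd (a p κ : ℝ) : ℝ := 1 + p * a * (p * a * (1 - κ ^ 2) + 2)
def Ac (P1 a γ2 p κ : ℝ) : Prop := (1 + γ2) * Dd a p κ ≤ (p * a + P1 + 1) ^ 2
def Bc (P1 a γ2 p κ : ℝ) : Prop := γ2 * Dd a p κ ≤ 2 * P1 * (p * a * (1 + κ) + 1)
def Tset (P1 a γ2 κ : ℝ) : Set ℝ :=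
  {p | 0 ≤ p ∧ ((p * κ * a ≤ P1 ∧ Ac P1 a γ2 p κ) ∨ (P1 ≤ p * κ * a ∧ Bc P1 a γ2 p κ))}

theorem key_id (P1 a p κ : ℝ) :
    (p * a + P1 + 1) ^ 2
      = Dd a p κ + 2 * P1 * (p * a * (1 + κ) + 1) + (p * κ * a - P1) ^ 2 := by
  simp only [Dd]; ring

theorem Dd_pos {a p κ : ℝ} (hp : 0 ≤ p * a) (hκ0 : 0 ≤ κ) (hκ1 : κ ≤ 1) :
    0 < Dd a p κ := by
  have h1 : 0 ≤ 1 - κ ^ 2 := by nlinarith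
  have : 0 ≤ p * a * (p * a * (1 - κ ^ 2) + 2) := by positivity
  simp only [Dd]; linarith

theorem Dd_factor (a p κ : ℝ) :
    Dd a p κ = (1 + p * a * (1 - κ)) * (1 + p * a * (1 + κ)) := by
  simp only [Dd]; ring

section Main
variable {P1 a γ1 γ2 : ℝ} (hP1 : 0 < P1) (ha : 0 < a) (hγ1 : 0 < γ1)
  (hγ1P : γ1 < P1) (hG : 1 + γ2 = (1 + γ1) ^ 2)

include hγ1 hG in
theorem γ2_pos : 0 < γ2 := by nlinarith

/-- Linearize the B-condition by dividing out the positive factor. -/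
theorem Bc_lin {p κ : ℝ} (hpa : 0 ≤ p * a) (hκ0 : 0 ≤ κ)
    (hB : Bc P1 a γ2 p κ) : γ2 * (1 + p * a * (1 - κ)) ≤ 2 * P1 := by
  have hu : 0 < p * a * (1 + κ) + 1 := by nlinarith
  have h2 : (γ2 * (1 + p * a * (1 - κ))) * (p * a * (1 + κ) + 1)
      ≤ (2 * P1) * (p * a * (1 + κ) + 1) := by
    unfold Bc Dd at hB; nlinarith [hB]
  exact le_of_mul_le_mul_right h2 hu

theorem Bc_of_lin {p κ : ℝ} (hpa : 0 ≤ p * a) (hκ0 : 0 ≤ κ)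
    (h : γ2 * (1 + p * a * (1 - κ)) ≤ 2 * P1) : Bc P1 a γ2 p κ := by
  have hu : (0:ℝ) ≤ p * a * (1 + κ) + 1 := by nlinarith
  have := mul_le_mul_of_nonneg_right h hu
  unfold Bc Dd; nlinarith [this]

/-- At the boundary `p*κ*a = P1` the two conditions agree. -/
theorem Ac_iff_Bc_boundary {p κ : ℝ} (hb : p * κ * a = P1) :
    Ac P1 a γ2 p κ ↔ Bc P1 a γ2 p κ := by
  have hid := key_id P1 a p κ
  rw [hb] at hid
  unfold Ac Bc
  constructor <;> intro h <;> nlinarith [h, hid]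

include hP1 ha hγ1 hG in
/-- Monotonicity of the admissible set in κ. -/
theorem Tmono {κ κ' : ℝ} (h0 : 0 ≤ κ) (hκκ' : κ ≤ κ') (h1 : κ' < 1) :
    Tset P1 a γ2 κ ⊆ Tset P1 a γ2 κ' := by
  rintro p ⟨hp, h⟩
  have hx : 0 ≤ p * a := by positivity
  have hγ2 : 0 < γ2 := γ2_pos hγ1 hG
  have hDle : Dd a p κ' ≤ Dd a p κ := by
    simp only [Dd]
    have : κ ^ 2 ≤ κ' ^ 2 := by nlinarith
    nlinarith [sq_nonneg (p*a)]
  refine ⟨hp, ?_⟩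
  rcases h with ⟨hb, hA⟩ | ⟨hb, hB⟩
  · by_cases hb' : p * κ' * a ≤ P1
    · left
      refine ⟨hb', ?_⟩
      unfold Ac at hA ⊢
      nlinarith
    · right
      have hb'' : P1 ≤ p * κ' * a := le_of_not_ge hb'
      refine ⟨hb'', ?_⟩
      have hid := key_id P1 a p κ'
      have hsq : (p * κ' * a - P1) ^ 2 ≤ (1 + γ2) * ((p*a)^2 * (κ'^2 - κ^2)) := by
        have h1 : p * κ' * a - P1 ≤ p * a * (κ' - κ) := by nlinarith
        have h2 : 0 ≤ p * κ' * a - P1 := by linarith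
        have h3 : (p * κ' * a - P1) ^ 2 ≤ (p * a * (κ' - κ))^2 := by nlinarith
        have h4 : (p * a * (κ' - κ))^2 ≤ (p*a)^2 * (κ'^2 - κ^2) := by
          nlinarith [mul_nonneg (mul_nonneg h0 (sub_nonneg.mpr hκκ')) (sq_nonneg (p*a))]
        have h5 : (1:ℝ) ≤ 1 + γ2 := by linarith
        nlinarith [sq_nonneg (p * κ' * a - P1)]
      have hDD : Dd a p κ = Dd a p κ' + (p*a)^2 * (κ'^2 - κ^2) := by
        simp only [Dd]; ring
      unfold Ac at hA
      unfold Bc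
      nlinarith
  · right
    have hκ'0 : 0 ≤ κ' := le_trans h0 hκκ'
    have hb' : p * κ * a ≤ p * κ' * a := by nlinarith
    refine ⟨le_trans hb hb', ?_⟩
    unfold Bc at hB ⊢
    nlinarith

include hP1 hγ1 hγ1P hG in
theorem T0 (κ : ℝ) : 0 ∈ Tset P1 a γ2 κ := by
  refine ⟨le_refl 0, Or.inl ⟨by simpa using hP1.le, ?_⟩⟩
  unfold Ac Dd
  nlinarith

theorem Tclosed (P1 a γ2 κ : ℝ) : IsClosed (Tset P1 a γ2 κ) := by
  have : Tset P1 a γ2 κ =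
      ({p : ℝ | 0 ≤ p} ∩
        (({p | p * κ * a ≤ P1} ∩ {p | (1 + γ2) * Dd a p κ ≤ (p * a + P1 + 1) ^ 2}) ∪
         ({p | P1 ≤ p * κ * a} ∩ {p | γ2 * Dd a p κ ≤ 2 * P1 * (p * a * (1 + κ) + 1)}))) := by
    ext p; simp only [Tset, Ac, Bc, Set.mem_setOf_eq, Set.mem_inter_iff, Set.mem_union]
  rw [this]
  have hD : Continuous fun p : ℝ => Dd a p κ := by unfold Dd; fun_prop
  refine (isClosed_le continuous_const continuous_id).inter (IsClosed.union ?_ ?_)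
  · exact (isClosed_le (by fun_prop) continuous_const).inter
      (isClosed_le (by fun_prop) (by fun_prop))
  · exact (isClosed_le continuous_const (by fun_prop)).inter
      (isClosed_le (by fun_prop) (by fun_prop))

omit hP1 in
include ha hγ1 hγ1P hG in
theorem Tbdd {κ : ℝ} (hκ0 : 0 ≤ κ) (hκ1 : κ < 1) : BddAbove (Tset P1 a γ2 κ) := by
  have hγ2 : 0 < γ2 := γ2_pos hγ1 hG
  have hP1 : 0 < P1 := lt_trans hγ1 hγ1P
  rcases eq_or_lt_of_le hκ0 with h0 | h0
  · refine ⟨(P1 - γ1)/(γ1*a), fun p hp => ?_⟩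
    obtain ⟨hp, hmem⟩ := hp
    rcases hmem with ⟨_, hA⟩ | ⟨hb, _⟩
    · have hpa : 0 ≤ p * a := by positivity
      unfold Ac Dd at hA
      rw [← h0, hG] at hA
      have hA' : ((1+γ1)*(1+p*a))^2 ≤ (p*a+P1+1)^2 := by nlinarith [hA]
      have hbc : 0 < (1+γ1)*(1+p*a) + (p*a+P1+1) := by nlinarith
      have hfac : (1 + γ1) * (1 + p*a) ≤ p * a + P1 + 1 := by nlinarith [hA', hbc]
      have : γ1 * (p * a) ≤ P1 - γ1 := by nlinarith
      rw [le_div_iff₀ (by positivity)]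
      nlinarith
    · rw [← h0] at hb; simp at hb; nlinarith
  · refine ⟨max (P1/(κ*a)) ((2*P1 - γ2)/(γ2*(1-κ)*a)), fun p hp => ?_⟩
    obtain ⟨hp, hmem⟩ := hp
    rcases hmem with ⟨hb, _⟩ | ⟨hb, hB⟩
    · refine le_max_of_le_left ?_
      rw [le_div_iff₀ (mul_pos h0 ha)]
      nlinarith
    · refine le_max_of_le_right ?_
      have hpa : 0 ≤ p * a := by positivity
      have hlin := Bc_lin hpa hκ0 hB
      rw [le_div_iff₀ (mul_pos (mul_pos hγ2 (by linarith : (0:ℝ) < 1 - κ)) ha)]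
      nlinarith

include hP1 ha hγ1 hγ1P hG in
theorem Tp0 : (P1 - γ1)/(γ1*a) ∈ Tset P1 a γ2 0 := by
  have hp0 : (0:ℝ) ≤ (P1 - γ1)/(γ1*a) := div_nonneg (by linarith) (by positivity)
  refine ⟨hp0, Or.inl ⟨by simpa using hP1.le, ?_⟩⟩
  have hx0 : (P1 - γ1)/(γ1*a) * a = (P1-γ1)/γ1 := by field_simp
  unfold Ac Dd
  rw [hx0, hG]
  have hγ1' : γ1 ≠ 0 := ne_of_gt hγ1
  field_simp
  ring_nf
  exact le_rfl

include hγ1 hG in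
/-- The key monotonicity step for the `Φ` potential, using the hypothesis on `a`. -/
theorem phi_mono {aa x1 x2 : ℝ} (hμ' : (1-aa)*(γ1*(1+γ1)) ≤ P1)
    (hx1 : P1 - γ1 ≤ γ1 * x1) (hx2 : P1 - γ1 ≤ γ1 * x2) (h12 : x1 ≤ x2) :
    (x1+P1+1)^2 + (1+γ2)*(2*aa*x1 - 1 - 2*x1)
      ≤ (x2+P1+1)^2 + (1+γ2)*(2*aa*x2 - 1 - 2*x2) := by
  have hf : 0 ≤ x2 + x1 + 2*(P1+1) + 2*(1+γ2)*(aa-1) := by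
    rw [hG]
    nlinarith [hx1, hx2, mul_le_mul_of_nonneg_left hμ' (by positivity : (0:ℝ) ≤ 2*(1+γ1)), hγ1]
  nlinarith [mul_nonneg (sub_nonneg.mpr h12) hf]


omit hP1 ha hγ1 hγ1P hG in
theorem Arev_of_Brev {x2 κ2 : ℝ} (hbd : x2 * κ2 = P1)
    (h1 : 2*P1 ≤ γ2 * (1 + x2*(1-κ2))) (hx2 : 0 ≤ x2) (hκ0 : 0 ≤ κ2) :
    (x2+P1+1)^2 ≤ (1+γ2) * (1 + x2*(x2*(1-κ2^2)+2)) := by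
  have hu : (0:ℝ) ≤ x2*(1+κ2)+1 := by nlinarith
  have h2 := mul_le_mul_of_nonneg_right h1 hu
  have hz : (x2*κ2 - P1)^2 = 0 := by rw [hbd]; ring
  nlinarith [h2, hz]

omit hP1 ha hγ1 hγ1P hG in
theorem e1_lemma {x1 κ1 aa : ℝ}
    (h : (1+γ2)*(1 + x1*(x1*(1-κ1^2)+2)) ≤ (x1+P1+1)^2) :
    (1+γ2)*(x1^2*(1-κ1^2)+2*aa*x1) ≤ (x1+P1+1)^2 + (1+γ2)*(2*aa*x1-1-2*x1) := by
  nlinarith [h]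

omit hP1 ha hγ1 hγ1P hG in
theorem e2_lemma {x2 κ2 aa : ℝ}
    (h : (x2+P1+1)^2 ≤ (1+γ2)*(1 + x2*(x2*(1-κ2^2)+2))) :
    (x2+P1+1)^2 + (1+γ2)*(2*aa*x2-1-2*x2) ≤ (1+γ2)*(x2^2*(1-κ2^2)+2*aa*x2) := by
  nlinarith [h]

end Main
end Stmt8Aux

open Stmt8Aux in
set_option maxHeartbeats 4000000 in
/-- Lemma 2, first case: If `a12 ≥ μ(α) = 1 − P1/(γ2 − γ1)`, then
`κ ↦ R2(q(κ), κ)` is monotonically nondecreasing on `[0,1)`, where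
`q(κ) = sSup {p ≥ 0 : Ψ(p,κ) ≥ R̄}` is the maximum interference power tolerated
by user 1. -/
theorem stmt8 (P1 P2 a12 α Rbar γ1 γ2 : ℝ)
    (hP1 : 0 < P1) (hP2 : 0 < P2) (ha12 : 0 < a12) (hα : α ∈ Set.Ioo (0:ℝ) 1)
    (hRbar : Rbar = α * Real.logb 2 (1 + P1))
    (hγ1 : γ1 = (1 + P1) ^ α - 1) (hγ2 : γ2 = (1 + P1) ^ (2 * α) - 1)
    (R2 : ℝ → ℝ → ℝ)
    (hR2 : ∀ p κ, R2 p κ = (1 / 2) * Real.logb 2 (1 + p * (p * (1 - κ ^ 2) + 2)))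
    (R1A : ℝ → ℝ → ℝ)
    (hR1A : ∀ p κ, R1A p κ = (1 / 2) * Real.logb 2
        ((p * a12 + P1 + 1) ^ 2 / (1 + p * a12 * (p * a12 * (1 - κ ^ 2) + 2))))
    (R1B : ℝ → ℝ → ℝ)
    (hR1B : ∀ p κ, R1B p κ = (1 / 2) * Real.logb 2
        (1 + 2 * P1 * (p * a12 * (1 + κ) + 1)
            / (1 + p * a12 * (p * a12 * (1 - κ ^ 2) + 2))))
    (Ψ : ℝ → ℝ → ℝ)
    (hΨ : ∀ p κ, Ψ p κ = if p * κ * a12 < P1 then R1A p κ else R1B p κ)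
    (q : ℝ → ℝ)
    (hq : ∀ κ, q κ = sSup {p : ℝ | 0 ≤ p ∧ Ψ p κ ≥ Rbar})
    (hμ : a12 ≥ 1 - P1 / (γ2 - γ1)) :
    MonotoneOn (fun κ => R2 (q κ) κ) (Set.Ico 0 1) := by
  obtain ⟨hα0, hα1⟩ := hα
  have hs : (1:ℝ) < 1 + P1 := by linarith
  have hγ1pos : 0 < γ1 := by
    rw [hγ1]
    have h := Real.rpow_lt_rpow_of_exponent_lt hs hα0
    rw [Real.rpow_zero] at h
    linarith
  have hγ1P : γ1 < P1 := by
    rw [hγ1]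
    have h := Real.rpow_lt_rpow_of_exponent_lt hs hα1
    rw [Real.rpow_one] at h
    linarith
  have hG : 1 + γ2 = (1 + γ1) ^ 2 := by
    rw [hγ2, hγ1]
    have h2 : (1+P1) ^ (2*α) = ((1+P1) ^ α) ^ (2:ℕ) := by
      rw [← Real.rpow_natCast ((1+P1) ^ α) 2, ← Real.rpow_mul (by linarith : (0:ℝ) ≤ 1+P1)]
      norm_num
      ring_nf
    rw [h2]; ring
  have hγ2pos : 0 < γ2 := γ2_pos hγ1pos hG
  have hG'pos : (0:ℝ) < 1 + γ2 := by linarith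
  have hγ21 : γ2 - γ1 = γ1 * (1 + γ1) := by linear_combination hG
  have hμ' : (1 - a12) * (γ1 * (1 + γ1)) ≤ P1 := by
    have h1 : 0 < γ2 - γ1 := by rw [hγ21]; positivity
    rw [ge_iff_le, sub_le_iff_le_add] at hμ
    have h2 : 1 - a12 ≤ P1 / (γ2 - γ1) := by linarith
    rw [le_div_iff₀ h1] at h2
    rw [← hγ21]; linarith
  have hRbar' : Rbar = (1/2) * Real.logb 2 (1 + γ2) := by
    rw [hRbar, hγ2]
    have h1 : (1:ℝ) + ((1+P1) ^ (2*α) - 1) = (1+P1) ^ (2*α) := by ring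
    rw [h1]
    unfold Real.logb
    rw [Real.log_rpow (by linarith)]
    ring
  -- the rate conditions, algebraically
  have hDpos : ∀ p κ : ℝ, 0 ≤ p → 0 ≤ κ → κ < 1 →
      0 < 1 + p * a12 * (p * a12 * (1 - κ ^ 2) + 2) := by
    intro p κ hp hk hk1
    exact Dd_pos (by positivity) hk hk1.le
  have hAiff : ∀ p κ : ℝ, 0 ≤ p → 0 ≤ κ → κ < 1 →
      (R1A p κ ≥ Rbar ↔ Ac P1 a12 γ2 p κ) := by
    intro p κ hp hk hk1
    have hD := hDpos p κ hp hk hk1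
    have hN : (0:ℝ) < (p * a12 + P1 + 1) ^ 2 := by positivity
    rw [hR1A, hRbar', ge_iff_le]
    have hlogiff := Real.logb_le_logb one_lt_two hG'pos (div_pos hN hD)
    constructor
    · intro h
      have h2 : Real.logb 2 (1 + γ2) ≤ Real.logb 2
          ((p * a12 + P1 + 1) ^ 2 / (1 + p * a12 * (p * a12 * (1 - κ ^ 2) + 2))) := by
        linarith
      have h3 := hlogiff.mp h2
      rw [le_div_iff₀ hD] at h3
      unfold Ac Dd
      linarith
    · intro h
      unfold Ac Dd at h
      have h3 : (1 + γ2) ≤ (p * a12 + P1 + 1) ^ 2 /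
          (1 + p * a12 * (p * a12 * (1 - κ ^ 2) + 2)) := by
        rw [le_div_iff₀ hD]; linarith
      have h2 := hlogiff.mpr h3
      linarith
  have hBiff : ∀ p κ : ℝ, 0 ≤ p → 0 ≤ κ → κ < 1 →
      (R1B p κ ≥ Rbar ↔ Bc P1 a12 γ2 p κ) := by
    intro p κ hp hk hk1
    have hD := hDpos p κ hp hk hk1
    have hu : (0:ℝ) ≤ 2 * P1 * (p * a12 * (1 + κ) + 1) := by positivity
    have hM : (0:ℝ) < 1 + 2 * P1 * (p * a12 * (1 + κ) + 1) /
        (1 + p * a12 * (p * a12 * (1 - κ ^ 2) + 2)) := by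
      have := div_nonneg hu hD.le
      linarith
    rw [hR1B, hRbar', ge_iff_le]
    have hlogiff := Real.logb_le_logb one_lt_two hG'pos hM
    constructor
    · intro h
      have h2 := hlogiff.mp (by linarith)
      have h3 : γ2 ≤ 2 * P1 * (p * a12 * (1 + κ) + 1) /
          (1 + p * a12 * (p * a12 * (1 - κ ^ 2) + 2)) := by linarith
      rw [le_div_iff₀ hD] at h3
      unfold Bc Dd
      linarith
    · intro h
      unfold Bc Dd at h
      have h3 : γ2 ≤ 2 * P1 * (p * a12 * (1 + κ) + 1) /
          (1 + p * a12 * (p * a12 * (1 - κ ^ 2) + 2)) := by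
        rw [le_div_iff₀ hD]; linarith
      have h2 := hlogiff.mpr (by linarith)
      linarith
  -- the admissible set, algebraically
  have hSeq : ∀ κ : ℝ, 0 ≤ κ → κ < 1 →
      {p : ℝ | 0 ≤ p ∧ Ψ p κ ≥ Rbar} = Tset P1 a12 γ2 κ := by
    intro κ hk hk1
    ext p
    simp only [Set.mem_setOf_eq, Tset]
    constructor
    · rintro ⟨hp, hpsi⟩
      refine ⟨hp, ?_⟩
      rw [hΨ] at hpsi
      by_cases hb : p * κ * a12 < P1
      · rw [if_pos hb] at hpsi
        exact Or.inl ⟨hb.le, (hAiff p κ hp hk hk1).mp hpsi⟩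
      · rw [if_neg hb] at hpsi
        exact Or.inr ⟨not_lt.mp hb, (hBiff p κ hp hk hk1).mp hpsi⟩
    · rintro ⟨hp, h⟩
      refine ⟨hp, ?_⟩
      rw [hΨ]
      by_cases hb : p * κ * a12 < P1
      · rw [if_pos hb]
        apply (hAiff p κ hp hk hk1).mpr
        rcases h with ⟨_, hA⟩ | ⟨hge, _⟩
        · exact hA
        · linarith
      · rw [if_neg hb]
        apply (hBiff p κ hp hk hk1).mpr
        rcases h with ⟨hle, hA⟩ | ⟨_, hB⟩
        · exact (Ac_iff_Bc_boundary (le_antisymm hle (not_lt.mp hb))).mp hA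
        · exact hB
  have hqT : ∀ κ : ℝ, 0 ≤ κ → κ < 1 → q κ = sSup (Tset P1 a12 γ2 κ) := by
    intro κ h1 h2; rw [hq, hSeq κ h1 h2]
  clear hSeq hAiff hBiff hDpos hRbar' hRbar hΨ hR1A hR1B hq hγ1 hγ2 hα0 hα1 hs hP2
  have hTne : ∀ κ : ℝ, (Tset P1 a12 γ2 κ).Nonempty :=
    fun κ => ⟨0, T0 hP1 hγ1pos hγ1P hG κ⟩
  have hTbdd : ∀ κ : ℝ, 0 ≤ κ → κ < 1 → BddAbove (Tset P1 a12 γ2 κ) :=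
    fun κ h1 h2 => Tbdd ha12 hγ1pos hγ1P hG h1 h2
  have hmemq : ∀ κ : ℝ, 0 ≤ κ → κ < 1 → q κ ∈ Tset P1 a12 γ2 κ := by
    intro κ h1 h2
    rw [hqT κ h1 h2]
    exact (Tclosed P1 a12 γ2 κ).csSup_mem (hTne κ) (hTbdd κ h1 h2)
  have hq0 : ∀ κ : ℝ, 0 ≤ κ → κ < 1 → 0 ≤ q κ := fun κ h1 h2 => (hmemq κ h1 h2).1
  have hqmono : ∀ κ κ' : ℝ, 0 ≤ κ → κ ≤ κ' → κ' < 1 → q κ ≤ q κ' := by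
    intro κ κ' h1 h2 h3
    rw [hqT κ h1 (lt_of_le_of_lt h2 h3), hqT κ' (le_trans h1 h2) h3]
    exact csSup_le_csSup (hTbdd κ' (le_trans h1 h2) h3) (hTne κ)
      (Tmono hP1 ha12 hγ1pos hG h1 h2 h3)
  have hqx0 : ∀ κ : ℝ, 0 ≤ κ → κ < 1 → P1 - γ1 ≤ γ1 * (q κ * a12) := by
    intro κ h1 h2
    have hmem : (P1 - γ1)/(γ1*a12) ∈ Tset P1 a12 γ2 κ :=
      Tmono hP1 ha12 hγ1pos hG (le_refl 0) h1 h2 (Tp0 hP1 ha12 hγ1pos hγ1P hG)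
    have h3 : (P1 - γ1)/(γ1*a12) ≤ q κ := by
      rw [hqT κ h1 h2]
      exact le_csSup (hTbdd κ h1 h2) hmem
    rw [div_le_iff₀ (by positivity)] at h3
    have h4 : q κ * (γ1 * a12) = γ1 * (q κ * a12) := by ring
    linarith
  -- main monotonicity argument
  intro κ1 hκ1 κ2 hκ2 h12
  obtain ⟨hκ10, hκ11⟩ := hκ1
  obtain ⟨hκ20, hκ21⟩ := hκ2
  rcases eq_or_lt_of_le h12 with heq | hlt12
  · subst heq; exact le_rfl
  have hκ2pos : 0 < κ2 := lt_of_le_of_lt hκ10 hlt12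
  simp only
  rw [hR2, hR2]
  have hq1 := hq0 κ1 hκ10 hκ11
  have hq2 := hq0 κ2 hκ20 hκ21
  have hqle : q κ1 ≤ q κ2 := hqmono κ1 κ2 hκ10 h12 hκ21
  have hEpos : (0:ℝ) < 1 + q κ1 * (q κ1 * (1 - κ1 ^ 2) + 2) := by
    have h1 : 0 ≤ 1 - κ1^2 := by nlinarith
    have h2 : 0 ≤ q κ1 * (1 - κ1^2) := mul_nonneg hq1 h1
    have h3 : 0 ≤ q κ1 * (q κ1 * (1 - κ1 ^ 2) + 2) := mul_nonneg hq1 (by linarith)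
    linarith
  -- reduce to the quadratic expression
  suffices hE : q κ1 * (q κ1 * (1 - κ1 ^ 2) + 2) ≤ q κ2 * (q κ2 * (1 - κ2 ^ 2) + 2) by
    have hstep : Real.logb 2 (1 + q κ1 * (q κ1 * (1 - κ1 ^ 2) + 2))
        ≤ Real.logb 2 (1 + q κ2 * (q κ2 * (1 - κ2 ^ 2) + 2)) :=
      Real.logb_le_logb_of_le one_lt_two hEpos (by linarith)
    linarith
  clear hR2
  -- pass to `x = q * a12` units
  obtain ⟨x1, hx1def⟩ : ∃ x1 : ℝ, x1 = q κ1 * a12 := ⟨_, rfl⟩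
  obtain ⟨x2, hx2def⟩ : ∃ x2 : ℝ, x2 = q κ2 * a12 := ⟨_, rfl⟩
  have hx1nn : 0 ≤ x1 := by rw [hx1def]; positivity
  have hx2nn : 0 ≤ x2 := by rw [hx2def]; positivity
  have hx12 : x1 ≤ x2 := by
    rw [hx1def, hx2def]; exact mul_le_mul_of_nonneg_right hqle ha12.le
  have ha2 : (0:ℝ) < a12 ^ 2 := by positivity
  suffices hEx : (1+γ2) * (x1^2*(1-κ1^2) + 2*a12*x1) ≤ (1+γ2) * (x2^2*(1-κ2^2) + 2*a12*x2) by
    have h2 := le_of_mul_le_mul_left hEx hG'pos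
    have key1 : q κ1 * (q κ1 * (1 - κ1 ^ 2) + 2) * a12^2 = x1^2*(1-κ1^2) + 2*a12*x1 := by
      rw [hx1def]; ring
    have key2 : q κ2 * (q κ2 * (1 - κ2 ^ 2) + 2) * a12^2 = x2^2*(1-κ2^2) + 2*a12*x2 := by
      rw [hx2def]; ring
    have h3 : q κ1 * (q κ1 * (1 - κ1 ^ 2) + 2) * a12^2
        ≤ q κ2 * (q κ2 * (1 - κ2 ^ 2) + 2) * a12^2 := by rw [key1, key2]; exact h2
    exact le_of_mul_le_mul_right h3 ha2
  -- the reverse B-inequality at κ2 (beyond the supremum the condition fails)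
  have hBrev : P1 ≤ q κ2 * κ2 * a12 → 2*P1 ≤ γ2 * (1 + x2 * (1-κ2)) := by
    intro hP1le
    by_contra hlt
    push_neg at hlt
    have hden : (0:ℝ) < γ2 * (1-κ2) * a12 :=
      mul_pos (mul_pos hγ2pos (by linarith)) ha12
    obtain ⟨p', hp'def⟩ : ∃ p' : ℝ, p' = (2*P1 - γ2)/(γ2*(1-κ2)*a12) := ⟨_, rfl⟩
    have hqp' : q κ2 < p' := by
      rw [hp'def, lt_div_iff₀ hden]
      rw [hx2def] at hlt
      have e : γ2 * (1 + q κ2 * a12 * (1-κ2)) = γ2 + q κ2 * (γ2 * (1-κ2) * a12) := by ring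
      linarith
    have hp'a : p' * a12 * (γ2 * (1-κ2)) = 2*P1 - γ2 := by
      rw [hp'def]; field_simp
    have hp'mem : p' ∈ Tset P1 a12 γ2 κ2 := by
      refine ⟨le_trans hq2 hqp'.le, Or.inr ⟨?_, ?_⟩⟩
      · have h1 := mul_le_mul_of_nonneg_right hqp'.le (mul_nonneg hκ20 ha12.le)
        have e1 : q κ2 * (κ2 * a12) = q κ2 * κ2 * a12 := by ring
        have e2 : p' * (κ2 * a12) = p' * κ2 * a12 := by ring
        linarith
      · apply Bc_of_lin (mul_nonneg (le_trans hq2 hqp'.le) ha12.le) hκ20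
        have e : γ2 * (1 + p' * a12 * (1-κ2)) = γ2 + p' * a12 * (γ2 * (1-κ2)) := by ring
        linarith [hp'a]
    have := le_csSup (hTbdd κ2 hκ20 hκ21) hp'mem
    rw [← hqT κ2 hκ20 hκ21] at this
    linarith
  by_cases hcase2 : q κ2 * κ2 * a12 ≤ P1
  · -- case 2A : the governing constraint at κ2 is the A-condition
    have hA2 : Ac P1 a12 γ2 (q κ2) κ2 := by
      rcases (hmemq κ2 hκ20 hκ21).2 with ⟨_, hA⟩ | ⟨hge, hB⟩
      · exact hA
      · exact (Ac_iff_Bc_boundary (le_antisymm hcase2 hge)).mpr hB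
    have hb1 : q κ1 * κ1 * a12 ≤ P1 := by
      have h1 : q κ1 * κ1 ≤ q κ2 * κ2 := mul_le_mul hqle h12 hκ10 hq2
      have h2 := mul_le_mul_of_nonneg_right h1 ha12.le
      linarith
    have hA1 : Ac P1 a12 γ2 (q κ1) κ1 := by
      rcases (hmemq κ1 hκ10 hκ11).2 with ⟨_, hA⟩ | ⟨hge, hB⟩
      · exact hA
      · exact (Ac_iff_Bc_boundary (le_antisymm hb1 hge)).mpr hB
    -- the reverse A-inequality at κ2
    have hrev2 : (x2+P1+1)^2 ≤ (1+γ2) * (1 + x2*(x2*(1-κ2^2)+2)) := by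
      rcases eq_or_lt_of_le hcase2 with hbd | hstrict
      · -- boundary case : convert the reverse B-inequality
        have h1 := hBrev hbd.ge
        have hbd' : x2 * κ2 = P1 := by
          rw [hx2def]
          have e : q κ2 * a12 * κ2 = q κ2 * κ2 * a12 := by ring
          linarith [hbd]
        exact Arev_of_Brev hbd' h1 hx2nn hκ20
      · -- strict case : limiting argument beyond the supremum
        have hub : q κ2 < P1/(κ2*a12) := by
          rw [lt_div_iff₀ (mul_pos hκ2pos ha12)]
          have e : q κ2 * (κ2 * a12) = q κ2 * κ2 * a12 := by ring
          linarith
        have hcont : Continuous (fun p : ℝ =>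
            (1+γ2) * (1 + p*a12*(p*a12*(1-κ2^2)+2)) - (p*a12+P1+1)^2) := by fun_prop
        have htend : Filter.Tendsto (fun p : ℝ =>
              (1+γ2) * (1 + p*a12*(p*a12*(1-κ2^2)+2)) - (p*a12+P1+1)^2)
            (nhdsWithin (q κ2) (Set.Ioi (q κ2)))
            (nhds ((1+γ2) * (1 + q κ2*a12*(q κ2*a12*(1-κ2^2)+2)) - (q κ2*a12+P1+1)^2)) :=
          (hcont.tendsto _).mono_left nhdsWithin_le_nhds
        have hev : ∀ᶠ p in nhdsWithin (q κ2) (Set.Ioi (q κ2)),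
            (0:ℝ) ≤ (1+γ2) * (1 + p*a12*(p*a12*(1-κ2^2)+2)) - (p*a12+P1+1)^2 := by
          filter_upwards [Ioo_mem_nhdsGT hub] with p hp
          have hpq : q κ2 < p := hp.1
          have hp0 : 0 ≤ p := le_trans hq2 hpq.le
          have hbp : p * κ2 * a12 ≤ P1 := by
            have h5 := hp.2
            rw [lt_div_iff₀ (mul_pos hκ2pos ha12)] at h5
            have e : p * (κ2 * a12) = p * κ2 * a12 := by ring
            linarith
          have hnot : p ∉ Tset P1 a12 γ2 κ2 := by
            intro hmem
            have h6 := le_csSup (hTbdd κ2 hκ20 hκ21) hmem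
            rw [← hqT κ2 hκ20 hκ21] at h6
            linarith
          by_contra hneg
          push_neg at hneg
          refine hnot ⟨hp0, Or.inl ⟨hbp, ?_⟩⟩
          unfold Ac Dd
          linarith
        have hfin := ge_of_tendsto htend hev
        rw [hx2def]
        linarith [hfin]
    -- assemble via the Φ potential
    have hphi := phi_mono hγ1pos hG hμ'
      (show P1 - γ1 ≤ γ1 * x1 by rw [hx1def]; exact hqx0 κ1 hκ10 hκ11)
      (show P1 - γ1 ≤ γ1 * x2 by rw [hx2def]; exact hqx0 κ2 hκ20 hκ21) hx12
    have hA1' : (1+γ2)*(1 + x1*(x1*(1-κ1^2)+2)) ≤ (x1+P1+1)^2 := by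
      unfold Ac Dd at hA1
      rw [← hx1def] at hA1
      exact hA1
    have e1 := e1_lemma (γ2 := γ2) (aa := a12) hA1'
    have e2 := e2_lemma (γ2 := γ2) (aa := a12) hrev2
    linarith [e1, hphi, e2]
  · -- case 2B : the governing constraint at κ2 is the B-condition
    push_neg at hcase2
    have hB2 : Bc P1 a12 γ2 (q κ2) κ2 := by
      rcases (hmemq κ2 hκ20 hκ21).2 with ⟨hle, _⟩ | ⟨_, hB⟩
      · linarith
      · exact hB
    have hlin2 := Bc_lin (mul_nonneg hq2 ha12.le) hκ20 hB2
    rw [← hx2def] at hlin2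
    have heq2 : γ2 * (1 + x2 * (1-κ2)) = 2*P1 := le_antisymm hlin2 (hBrev hcase2.le)
    have hx2pos : 0 < x2 := by
      rw [hx2def]
      have hm := mul_nonneg (mul_nonneg hq2 ha12.le) (by linarith : (0:ℝ) ≤ 1-κ2)
      nlinarith [hcase2, hm]
    by_cases hcase1 : P1 ≤ q κ1 * κ1 * a12
    · -- case BB
      have hB1 : Bc P1 a12 γ2 (q κ1) κ1 := by
        rcases (hmemq κ1 hκ10 hκ11).2 with ⟨hle, hA⟩ | ⟨_, hB⟩
        · exact (Ac_iff_Bc_boundary (le_antisymm hle hcase1)).mp hA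
        · exact hB
      have hlin1 := Bc_lin (mul_nonneg hq1 ha12.le) hκ10 hB1
      rw [← hx1def] at hlin1
      have hfac1 : x1 * (1-κ1) ≤ x2 * (1-κ2) := by
        have h5 : γ2 * (1 + x1*(1-κ1)) ≤ γ2 * (1 + x2*(1-κ2)) := by linarith
        have h6 := (mul_le_mul_iff_right₀ hγ2pos).mp h5
        linarith
      have hfac2 : x1 * (1+κ1) ≤ x2 * (1+κ2) :=
        mul_le_mul hx12 (by linarith) (by linarith) hx2nn
      have hprod : (x1*(1-κ1)) * (x1*(1+κ1)) ≤ (x2*(1-κ2)) * (x2*(1+κ2)) :=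
        mul_le_mul hfac1 hfac2 (mul_nonneg hx1nn (by linarith))
          (mul_nonneg hx2nn (by linarith))
      have h2a : 2*a12*x1 ≤ 2*a12*x2 := by
        have := mul_le_mul_of_nonneg_left hx12 (by positivity : (0:ℝ) ≤ 2*a12)
        linarith
      have hsum : x1^2*(1-κ1^2) + 2*a12*x1 ≤ x2^2*(1-κ2^2) + 2*a12*x2 := by
        linarith [hprod, h2a]
      exact mul_le_mul_of_nonneg_left hsum hG'pos.le
    · -- case AB : bridge through the regime boundary κb
      push_neg at hcase1
      have hA1 : Ac P1 a12 γ2 (q κ1) κ1 := by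
        rcases (hmemq κ1 hκ10 hκ11).2 with ⟨_, hA⟩ | ⟨hge, _⟩
        · exact hA
        · linarith
      have hc2pos : 0 < 2*P1 - γ2 := by
        have hm := mul_pos (mul_pos hγ2pos hx2pos) (by linarith : (0:ℝ) < 1-κ2)
        linarith [heq2, hm]
      obtain ⟨xb, hxbdef⟩ : ∃ xb : ℝ, xb = P1 + (2*P1-γ2)/γ2 := ⟨_, rfl⟩
      have hxbP1 : P1 < xb := by
        rw [hxbdef]
        have : 0 < (2*P1-γ2)/γ2 := by positivity
        linarith
      have hxbpos : 0 < xb := lt_trans hP1 hxbP1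
      obtain ⟨κb, hκbdef⟩ : ∃ κb : ℝ, κb = P1/xb := ⟨_, rfl⟩
      have hκb0 : 0 < κb := by rw [hκbdef]; positivity
      have hκb1 : κb < 1 := by rw [hκbdef, div_lt_one hxbpos]; exact hxbP1
      have hxbκb : xb * κb = P1 := by
        rw [hκbdef]; field_simp
      have hxb1 : γ2 * (1 + xb * (1-κb)) = 2*P1 := by
        have h1 : xb * (1-κb) = (2*P1-γ2)/γ2 := by
          have e : xb * (1-κb) = xb - xb*κb := by ring
          rw [e, hxbκb, hxbdef]; ring
        rw [h1]; field_simp; ring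
      have hbeq : xb * (1-κb) = x2 * (1-κ2) := by
        have h1 : γ2 * (1 + xb*(1-κb)) = γ2 * (1 + x2*(1-κ2)) := by rw [hxb1, heq2]
        have h2 := mul_left_cancel₀ hγ2pos.ne' h1
        linarith
      -- the bridging point pb
      obtain ⟨pb, hpbdef⟩ : ∃ pb : ℝ, pb = xb/a12 := ⟨_, rfl⟩
      have hpba : pb * a12 = xb := by
        rw [hpbdef]; field_simp
      have hpbmem : pb ∈ Tset P1 a12 γ2 κb := by
        refine ⟨by rw [hpbdef]; positivity, Or.inr ⟨?_, ?_⟩⟩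
        · have e : pb * κb * a12 = pb * a12 * κb := by ring
          rw [e, hpba, hxbκb]
        · apply Bc_of_lin (by rw [hpba]; exact hxbpos.le) hκb0.le
          rw [hpba, hxb1]
      have hκb2 : κb ≤ κ2 := by
        rw [hκbdef, div_le_iff₀ hxbpos]
        have hP1x2 : P1 < x2 * κ2 := by
          have e : x2 * κ2 = q κ2 * κ2 * a12 := by rw [hx2def]; ring
          linarith
        have id1 : κ2*xb = κ2*P1 + κ2*(xb*(1-κb)) := by linear_combination κ2 * hxbκb
        have h5 : P1*(1-κ2) ≤ (x2*κ2)*(1-κ2) :=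
          mul_le_mul_of_nonneg_right hP1x2.le (by linarith)
        have id2 : κ2*(x2*(1-κ2)) = (x2*κ2)*(1-κ2) := by ring
        rw [hbeq] at id1
        linarith
      have hκ1b : κ1 ≤ κb := by
        by_contra hlt
        push_neg at hlt
        have hκ1pos : 0 < κ1 := lt_trans hκb0 hlt
        obtain ⟨ph, hphdef⟩ : ∃ ph : ℝ, ph = P1/(κ1*a12) := ⟨_, rfl⟩
        have hpha : ph * a12 = P1/κ1 := by
          rw [hphdef]; field_simp
        have hxh : P1/κ1 < xb := by
          rw [div_lt_iff₀ hκ1pos]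
          rw [hκbdef, div_lt_iff₀ hxbpos] at hlt
          have e : κ1*xb = xb*κ1 := by ring
          linarith
        have hphmem : ph ∈ Tset P1 a12 γ2 κ1 := by
          refine ⟨by rw [hphdef]; positivity, Or.inr ⟨?_, ?_⟩⟩
          · have e : ph * κ1 * a12 = (ph * a12) * κ1 := by ring
            rw [e, hpha, div_mul_cancel₀ _ (ne_of_gt hκ1pos)]
          · apply Bc_of_lin (by rw [hpha]; positivity) hκ10
            rw [hpha, ← hxb1]
            have h1 : (P1/κ1) * (1-κ1) ≤ xb * (1-κb) :=
              mul_le_mul hxh.le (by linarith) (by linarith) hxbpos.le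
            exact mul_le_mul_of_nonneg_left (by linarith) hγ2pos.le
        have h2 : ph ≤ q κ1 := by
          rw [hqT κ1 hκ10 hκ11]
          exact le_csSup (hTbdd κ1 hκ10 hκ11) hphmem
        have h4 : ph * κ1 * a12 ≤ q κ1 * κ1 * a12 :=
          mul_le_mul_of_nonneg_right (mul_le_mul_of_nonneg_right h2 hκ1pos.le) ha12.le
        have h5 : ph * κ1 * a12 = P1 := by
          have e : ph * κ1 * a12 = (ph * a12) * κ1 := by ring
          rw [e, hpha, div_mul_cancel₀ _ (ne_of_gt hκ1pos)]
        linarith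
      have hx1xb : x1 ≤ xb := by
        have hub : ∀ p ∈ Tset P1 a12 γ2 κb, p ≤ pb := by
          rintro p ⟨hp, hmem⟩
          rcases hmem with ⟨hb, _⟩ | ⟨_, hB⟩
          · have e : p * a12 * κb = p * κb * a12 := by ring
            have h1 : p * a12 * κb ≤ xb * κb := by rw [e, hxbκb]; exact hb
            have h2 : p * a12 ≤ xb := le_of_mul_le_mul_right h1 hκb0
            rw [hpbdef, le_div_iff₀ ha12]
            linarith
          · have hlin := Bc_lin (mul_nonneg hp ha12.le) hκb0.le hB
            rw [← hxb1] at hlin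
            have h1 : p * a12 * (1-κb) ≤ xb * (1-κb) := by
              have h6 := (mul_le_mul_iff_right₀ hγ2pos).mp hlin
              linarith
            have h2 : p * a12 ≤ xb := le_of_mul_le_mul_right h1 (by linarith)
            rw [hpbdef, le_div_iff₀ ha12]
            linarith
        have h1 : q κ1 ≤ pb := by
          rw [hqT κ1 hκ10 hκ11]
          apply csSup_le (hTne κ1)
          intro p hp
          exact hub p (Tmono hP1 ha12 hγ1pos hG hκ10 hκ1b hκb1 hp)
        rw [hx1def, ← hpba]
        exact mul_le_mul_of_nonneg_right h1 ha12.le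
      have hxbx2 : xb ≤ x2 := by
        have h1 : pb ≤ q κ2 := by
          rw [hqT κ2 hκ20 hκ21]
          exact le_csSup (hTbdd κ2 hκ20 hκ21)
            (Tmono hP1 ha12 hγ1pos hG hκb0.le hκb2 hκ21 hpbmem)
        rw [hx2def, ← hpba]
        exact mul_le_mul_of_nonneg_right h1 ha12.le
      -- A-equality at the bridge point
      have h2u : 2*P1*(xb*(1+κb)+1) = γ2*(1+2*xb+(1-κb^2)*xb^2) := by
        have expand : γ2*(1+2*xb+(1-κb^2)*xb^2) = (γ2*(1+xb*(1-κb))) * (1+xb*(1+κb)) := by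
          ring
        rw [expand, hxb1]; ring
      have hz : xb*κb - P1 = 0 := by rw [hxbκb]; ring
      have hAeqb : (xb+P1+1)^2 = (1+γ2)*(1+2*xb+(1-κb^2)*xb^2) := by
        linear_combination h2u + (xb*κb - P1) * hz
      -- assemble
      have hx1ge : P1 - γ1 ≤ γ1 * x1 := by rw [hx1def]; exact hqx0 κ1 hκ10 hκ11
      have hxbge : P1 - γ1 ≤ γ1 * xb := by
        have := mul_le_mul_of_nonneg_left hx1xb hγ1pos.le
        linarith
      have hphi := phi_mono hγ1pos hG hμ' hx1ge hxbge hx1xb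
      have hA1' : (1+γ2)*(1 + x1*(x1*(1-κ1^2)+2)) ≤ (x1+P1+1)^2 := by
        unfold Ac Dd at hA1
        rw [← hx1def] at hA1
        exact hA1
      have e1 := e1_lemma (γ2 := γ2) (aa := a12) hA1'
      have e2 : (xb+P1+1)^2 + (1+γ2)*(2*a12*xb-1-2*xb)
          = (1+γ2)*((xb*(1-κb))*(xb*(1+κb))+2*a12*xb) := by
        rw [hAeqb]; ring
      have hfac2 : xb*(1+κb) ≤ x2*(1+κ2) :=
        mul_le_mul hxbx2 (by linarith) (by linarith) hx2nn
      have hprod : (xb*(1-κb))*(xb*(1+κb)) ≤ (x2*(1-κ2))*(x2*(1+κ2)) := by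
        rw [hbeq]
        exact mul_le_mul_of_nonneg_left hfac2 (mul_nonneg hx2nn (by linarith))
      have h2a : 2*a12*xb ≤ 2*a12*x2 := by
        have := mul_le_mul_of_nonneg_left hxbx2 (by positivity : (0:ℝ) ≤ 2*a12)
        linarith
      have e3 : (1+γ2)*((xb*(1-κb))*(xb*(1+κb))+2*a12*xb)
          ≤ (1+γ2)*((x2*(1-κ2))*(x2*(1+κ2))+2*a12*x2) :=
        mul_le_mul_of_nonneg_left (by linarith) hG'pos.le
      have efin : (1+γ2)*((x2*(1-κ2))*(x2*(1+κ2))+2*a12*x2)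
          = (1+γ2)*(x2^2*(1-κ2^2)+2*a12*x2) := by ring
      linarith [e1, hphi, e2, e3, efin]
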